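/- arXiv:1510.05012 — 3 statements merged into one kernel-verified Lean document; each statement's English description precedes it below -/
import Mathlib

section
/- Let d = ℓ + k with ℓ, k ≥ 1, let x ∈ R^ℓ, and let ψ : N → R^+ be a nonincreasing function such that ∑_{q∈N} ψ(q)^d diverges. Then the sum of ψ(q)^k over all q ∈ N satisfying ‖qx‖ < ψ(q) also diverges. -/
open scoped Classical

/-- Sup-norm distance from `x ∈ ℝ^ℓ` to the nearest integer point of `ℤ^ℓ`. -/
noncomputable def distInt {l : ℕ} (x : Fin l → ℝ) : ℝ :=
  ⨅ p : Fin l → ℤ, ‖x - fun i => (p i : ℝ)‖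

open Finset

lemma distInt_lt {l : ℕ} (x : Fin l → ℝ) {δ : ℝ} (hδ : 0 < δ) (p : Fin l → ℤ)
    (h : ∀ i, |x i - (p i : ℝ)| < δ) : distInt x < δ := by
  have hb : BddBelow (Set.range fun p : Fin l → ℤ => ‖x - fun i => (p i : ℝ)‖) := by
    refine ⟨0, ?_⟩
    rintro r ⟨q, rfl⟩
    positivity
  refine lt_of_le_of_lt (ciInf_le hb p) ?_
  rw [pi_norm_lt_iff hδ]
  intro i
  simpa using h i

lemma pow_sub_pow_le_mul {a b : ℝ} (hb : 0 ≤ b) (hba : b ≤ a) (n : ℕ) :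
    a ^ n - b ^ n ≤ n * a ^ (n - 1) * (a - b) := by
  have ha : 0 ≤ a := hb.trans hba
  rw [← geom_sum₂_mul a b n]
  have hsum : (∑ i ∈ range n, a ^ i * b ^ (n - 1 - i)) ≤ n * a ^ (n - 1) := by
    calc (∑ i ∈ range n, a ^ i * b ^ (n - 1 - i)) ≤ ∑ i ∈ range n, a ^ (n - 1) := by
          refine Finset.sum_le_sum fun i hi => ?_
          have hi' : i ≤ n - 1 := by have := mem_range.mp hi; omega
          calc a ^ i * b ^ (n - 1 - i) ≤ a ^ i * a ^ (n - 1 - i) := by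
                exact mul_le_mul_of_nonneg_left (pow_le_pow_left₀ hb hba _) (pow_nonneg ha _)
            _ = a ^ (n - 1) := by rw [← pow_add]; congr 1; omega
      _ = n * a ^ (n - 1) := by rw [Finset.sum_const, card_range, nsmul_eq_mul]
  exact mul_le_mul_of_nonneg_right hsum (by linarith)

lemma le_pow_sub_pow {a b : ℝ} (hb : 0 ≤ b) (hba : b ≤ a) (n : ℕ) :
    (n : ℝ) * b ^ (n - 1) * (a - b) ≤ a ^ n - b ^ n := by
  have ha : 0 ≤ a := hb.trans hba
  rw [← geom_sum₂_mul a b n]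
  have hsum : (n : ℝ) * b ^ (n - 1) ≤ ∑ i ∈ range n, a ^ i * b ^ (n - 1 - i) := by
    calc (n : ℝ) * b ^ (n - 1) = ∑ i ∈ range n, b ^ (n - 1) := by
          rw [Finset.sum_const, card_range, nsmul_eq_mul]
      _ ≤ ∑ i ∈ range n, a ^ i * b ^ (n - 1 - i) := by
          refine Finset.sum_le_sum fun i hi => ?_
          have hi' : i ≤ n - 1 := by have := mem_range.mp hi; omega
          calc b ^ (n - 1) = b ^ i * b ^ (n - 1 - i) := by rw [← pow_add]; congr 1; omega
            _ ≤ a ^ i * b ^ (n - 1 - i) := by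
                exact mul_le_mul_of_nonneg_right (pow_le_pow_left₀ hb hba _) (pow_nonneg hb _)
  exact mul_le_mul_of_nonneg_right hsum (by linarith)

lemma key_pow_ineq (k l : ℕ) (hk : 1 ≤ k) (hl : 1 ≤ l) {a b : ℝ} (hb : 0 ≤ b) (hba : b ≤ a) :
    (k : ℝ) * (a ^ (l + k) - b ^ (l + k)) ≤ ((l : ℝ) + k) * (a ^ l * (a ^ k - b ^ k)) := by
  have ha : 0 ≤ a := hb.trans hba
  have h1 : a ^ l - b ^ l ≤ l * a ^ (l - 1) * (a - b) := pow_sub_pow_le_mul hb hba l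
  have h2 : (k : ℝ) * b ^ (k - 1) * (a - b) ≤ a ^ k - b ^ k := le_pow_sub_pow hb hba k
  have hid : a ^ (l + k) - b ^ (l + k) = a ^ l * (a ^ k - b ^ k) + b ^ k * (a ^ l - b ^ l) := by
    rw [pow_add, pow_add]; ring
  have c3 : b ^ k * a ^ (l - 1) ≤ a ^ l * b ^ (k - 1) := by
    have e1 : b ^ k = b ^ (k - 1) * b := by rw [← pow_succ]; congr 1; omega
    have e2 : a ^ l = a ^ (l - 1) * a := by rw [← pow_succ]; congr 1; omega
    rw [e1, e2]
    have := mul_le_mul_of_nonneg_left hba (mul_nonneg (pow_nonneg hb (k-1)) (pow_nonneg ha (l-1)))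
    nlinarith [pow_nonneg hb (k-1), pow_nonneg ha (l-1)]
  have hmain : (k : ℝ) * (b ^ k * (a ^ l - b ^ l)) ≤ (l : ℝ) * (a ^ l * (a ^ k - b ^ k)) := by
    have c1 : (k : ℝ) * (b ^ k * (a ^ l - b ^ l)) ≤ (k : ℝ) * (b ^ k * ((l : ℝ) * a ^ (l - 1) * (a - b))) := by
      refine mul_le_mul_of_nonneg_left (mul_le_mul_of_nonneg_left h1 (pow_nonneg hb k)) (by positivity)
    have c2 : (l : ℝ) * (a ^ l * ((k : ℝ) * b ^ (k - 1) * (a - b))) ≤ (l : ℝ) * (a ^ l * (a ^ k - b ^ k)) := by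
      refine mul_le_mul_of_nonneg_left (mul_le_mul_of_nonneg_left h2 (pow_nonneg ha l)) (by positivity)
    have cmid : (k : ℝ) * (b ^ k * ((l : ℝ) * a ^ (l - 1) * (a - b))) ≤
        (l : ℝ) * (a ^ l * ((k : ℝ) * b ^ (k - 1) * (a - b))) := by
      have hab : 0 ≤ a - b := by linarith
      nlinarith [mul_le_mul_of_nonneg_right c3 (mul_nonneg (by positivity : (0:ℝ) ≤ (k:ℝ) * (l:ℝ)) hab)]
    linarith
  have hkpos : (0:ℝ) ≤ a ^ l * (a ^ k - b ^ k) := by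
    have : b ^ k ≤ a ^ k := pow_le_pow_left₀ hb hba k
    have := pow_nonneg ha l
    nlinarith
  rw [hid]
  nlinarith [hkpos]

lemma count_lower {l : ℕ} (x : Fin l → ℝ) {δ : ℝ} (hδ0 : 0 < δ) (hδ1 : δ ≤ 1) (Q : ℕ) :
    (Q : ℝ) * δ ^ l / 2 ^ l - 1 ≤
      (((Finset.Ioc 0 Q).filter fun q : ℕ => distInt (fun i => (q : ℝ) * x i) < δ)).card := by
  set M : ℕ := ⌈1 / δ⌉₊ with hMdef
  have hM1 : 1 ≤ M := Nat.one_le_iff_ne_zero.mpr (by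
    simp only [hMdef, ne_eq, Nat.ceil_eq_zero, not_le]
    positivity)
  have hMpos : (0:ℝ) < M := by exact_mod_cast hM1
  have hMδ : 1 ≤ (M : ℝ) * δ := by
    have h := Nat.le_ceil (1 / δ)
    rw [div_le_iff₀ hδ0] at h
    exact h
  have hM2 : (M : ℝ) ≤ 2 / δ := by
    have h0 : (M : ℝ) < 1 / δ + 1 := Nat.ceil_lt_add_one (by positivity)
    have h1 : (1:ℝ) ≤ 1 / δ := one_le_one_div hδ0 hδ1
    have h2 : (2:ℝ) / δ = 2 * (1 / δ) := by ring
    linarith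
  set n : ℕ := Q / M ^ l with hndef
  -- part B : real bound
  have hB : (Q : ℝ) * δ ^ l / 2 ^ l - 1 ≤ (n : ℝ) := by
    have h1 : Q < (n + 1) * M ^ l := by
      have hml : 0 < M ^ l := Nat.pow_pos hM1
      calc Q < M ^ l * (Q / M ^ l) + M ^ l := by
            have := Nat.div_add_mod Q (M ^ l)
            have := Nat.mod_lt Q hml
            omega
        _ = (Q / M ^ l + 1) * M ^ l := by ring
        _ = (n + 1) * M ^ l := by rw [hndef]
    have h1r : (Q : ℝ) < ((n : ℝ) + 1) * (M : ℝ) ^ l := by exact_mod_cast h1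
    have h2 : (M : ℝ) ^ l * (δ / 2) ^ l ≤ 1 := by
      have : (M : ℝ) * (δ / 2) ≤ 1 := by
        have e : (2 / δ) * (δ / 2) = 1 := by field_simp
        have := mul_le_mul_of_nonneg_right hM2 (by positivity : (0:ℝ) ≤ δ / 2)
        linarith
      calc (M : ℝ) ^ l * (δ / 2) ^ l = ((M : ℝ) * (δ / 2)) ^ l := (mul_pow _ _ _).symm
        _ ≤ 1 ^ l := pow_le_pow_left₀ (by positivity) this l
        _ = 1 := one_pow l
    have h3 : (Q : ℝ) * (δ / 2) ^ l < (n : ℝ) + 1 := by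
      have hp : (0:ℝ) < (δ / 2) ^ l := by positivity
      calc (Q : ℝ) * (δ / 2) ^ l < ((n : ℝ) + 1) * (M : ℝ) ^ l * (δ / 2) ^ l :=
            mul_lt_mul_of_pos_right h1r hp
        _ = ((n : ℝ) + 1) * ((M : ℝ) ^ l * (δ / 2) ^ l) := by ring
        _ ≤ ((n : ℝ) + 1) * 1 := by
            refine mul_le_mul_of_nonneg_left h2 (by positivity)
        _ = (n : ℝ) + 1 := mul_one _
    have : (Q : ℝ) * δ ^ l / 2 ^ l = (Q : ℝ) * (δ / 2) ^ l := by
      rw [div_pow]; ring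
    rw [this]; linarith
  refine hB.trans ?_
  have hA : n ≤ (((Finset.Ioc 0 Q).filter fun q : ℕ => distInt (fun i => (q : ℝ) * x i) < δ)).card := by
    rcases Nat.eq_zero_or_pos n with h0 | hnpos
    · simp [h0]
    -- define the box map
    have hFlt : ∀ (q : ℕ) (i : Fin l), (⌊Int.fract ((q : ℝ) * x i) * M⌋).toNat < M := by
      intro q i
      have hf0 : (0:ℝ) ≤ Int.fract ((q : ℝ) * x i) := Int.fract_nonneg _
      have hf1 : Int.fract ((q : ℝ) * x i) < 1 := Int.fract_lt_one _
      have h1 : Int.fract ((q : ℝ) * x i) * M < M := by nlinarith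
      have h2 : ⌊Int.fract ((q : ℝ) * x i) * M⌋ < (M : ℤ) := by
        rw [Int.floor_lt]; exact_mod_cast h1
      have h3 : 0 ≤ ⌊Int.fract ((q : ℝ) * x i) * M⌋ := Int.floor_nonneg.mpr (by positivity)
      omega
    set F : ℕ → Fin l → Fin M := fun q i => ⟨(⌊Int.fract ((q : ℝ) * x i) * M⌋).toNat, hFlt q i⟩
      with hFdef
    have hcard : (Finset.univ : Finset (Fin l → Fin M)).card * n < (Finset.range (Q + 1)).card := by
      rw [Finset.card_univ, Finset.card_range]
      have hc : Fintype.card (Fin l → Fin M) = M ^ l := by simp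
      rw [hc]
      have := Nat.div_mul_le_self Q (M ^ l)
      have : M ^ l * n ≤ Q := by rw [hndef, Nat.mul_comm]; exact Nat.div_mul_le_self Q (M ^ l)
      omega
    obtain ⟨y, -, hy⟩ := Finset.exists_lt_card_fiber_of_mul_lt_card_of_maps_to
      (f := F) (t := Finset.univ) (fun a _ => Finset.mem_univ _) hcard
    set f : Finset ℕ := (Finset.range (Q + 1)).filter fun q => F q = y with hfdef
    have hfne : f.Nonempty := Finset.card_pos.mp (lt_of_le_of_lt (Nat.zero_le n) hy)
    set qm : ℕ := f.max' hfne with hqmdef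
    have hqmf : qm ∈ f := Finset.max'_mem f hfne
    have hqmQ : qm ≤ Q := by
      have := (Finset.mem_filter.mp hqmf).1
      rw [Finset.mem_range] at this; omega
    -- injection from f.erase qm
    have hmaps : ∀ q ∈ f.erase qm, qm - q ∈
        ((Finset.Ioc 0 Q).filter fun r : ℕ => distInt (fun i => (r : ℝ) * x i) < δ) := by
      intro q hq
      have hqf : q ∈ f := Finset.mem_of_mem_erase hq
      have hqne : q ≠ qm := Finset.ne_of_mem_erase hq
      have hqlt : q < qm := lt_of_le_of_ne (Finset.le_max' f q hqf) hqne
      rw [Finset.mem_filter]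
      constructor
      · rw [Finset.mem_Ioc]; omega
      · -- distance bound
        have hcast : ((qm - q : ℕ) : ℝ) = (qm : ℝ) - (q : ℝ) := by
          rw [Nat.cast_sub hqlt.le]
        refine distInt_lt _ hδ0 (fun i => ⌊(qm : ℝ) * x i⌋ - ⌊(q : ℝ) * x i⌋) ?_
        intro i
        have hFy1 : F qm = y := (Finset.mem_filter.mp hqmf).2
        have hFy2 : F q = y := (Finset.mem_filter.mp hqf).2
        have hfl : ⌊Int.fract ((qm : ℝ) * x i) * M⌋ = ⌊Int.fract ((q : ℝ) * x i) * M⌋ := by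
          have h1 : (F qm i).val = (F q i).val := by rw [hFy1, hFy2]
          simp only [hFdef] at h1
          have h3 : 0 ≤ ⌊Int.fract ((qm : ℝ) * x i) * M⌋ :=
            Int.floor_nonneg.mpr (mul_nonneg (Int.fract_nonneg _) hMpos.le)
          have h4 : 0 ≤ ⌊Int.fract ((q : ℝ) * x i) * M⌋ :=
            Int.floor_nonneg.mpr (mul_nonneg (Int.fract_nonneg _) hMpos.le)
          omega
        have habs : |Int.fract ((qm : ℝ) * x i) * M - Int.fract ((q : ℝ) * x i) * M| < 1 :=
          Int.abs_sub_lt_one_of_floor_eq_floor hfl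
        have habs2 : |Int.fract ((qm : ℝ) * x i) - Int.fract ((q : ℝ) * x i)| < 1 / M := by
          have hX : Int.fract ((qm : ℝ) * x i) - Int.fract ((q : ℝ) * x i) =
              (Int.fract ((qm : ℝ) * x i) * M - Int.fract ((q : ℝ) * x i) * M) / M := by
            field_simp
          rw [hX, abs_div, abs_of_pos hMpos]
          exact (div_lt_div_iff_of_pos_right hMpos).mpr habs
        have h1M : 1 / (M:ℝ) ≤ δ := by
          rw [div_le_iff₀ hMpos]; linarith [hMδ]
        have hexpr : ((qm - q : ℕ) : ℝ) * x i -
            ((⌊(qm : ℝ) * x i⌋ : ℝ) - (⌊(q : ℝ) * x i⌋ : ℝ)) =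
            Int.fract ((qm : ℝ) * x i) - Int.fract ((q : ℝ) * x i) := by
          rw [hcast, Int.fract, Int.fract]
          push_cast
          ring
        calc |((qm - q : ℕ) : ℝ) * x i - (((⌊(qm : ℝ) * x i⌋ - ⌊(q : ℝ) * x i⌋ : ℤ)) : ℝ)|
            = |Int.fract ((qm : ℝ) * x i) - Int.fract ((q : ℝ) * x i)| := by
              rw [← hexpr]; push_cast; ring_nf
          _ < 1 / M := habs2
          _ ≤ δ := h1M
    have hinj : Set.InjOn (fun q => qm - q) (f.erase qm) := by
      intro a ha b hb hab
      have ha' : a ≤ qm := Finset.le_max' f a (Finset.mem_of_mem_erase ha)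
      have hb' : b ≤ qm := Finset.le_max' f b (Finset.mem_of_mem_erase hb)
      simp only at hab
      omega
    have hcard2 : (f.erase qm).card ≤
        (((Finset.Ioc 0 Q)).filter fun r : ℕ => distInt (fun i => (r : ℝ) * x i) < δ).card :=
      Finset.card_le_card_of_injOn _ hmaps hinj
    have : n ≤ (f.erase qm).card := by
      rw [Finset.card_erase_of_mem hqmf]
      omega
    omega
  exact_mod_cast hA
set_option maxHeartbeats 1000000

theorem stmt_3 (l k d : ℕ) (hl : 1 ≤ l) (hk : 1 ≤ k) (hd : d = l + k)
    (x : Fin l → ℝ) (ψ : ℕ → ℝ) (hψpos : ∀ q, 0 < ψ q) (hψmono : Antitone ψ)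
    (hdiv : ¬ Summable fun q : ℕ => ψ q ^ d) :
    ¬ Summable fun q : ℕ =>
      if distInt (fun i => (q : ℝ) * x i) < ψ q then ψ q ^ k else 0 := by
  subst hd
  intro hsum
  obtain ⟨φ, hφdef⟩ : ∃ f : ℕ → ℝ, f = fun q => min (ψ q) (1 / 2) := ⟨_, rfl⟩
  have hφq : ∀ q, φ q = min (ψ q) (1 / 2) := fun q => by rw [hφdef]
  have hφpos : ∀ q, 0 < φ q := fun q => by
    rw [hφq]; exact lt_min (hψpos q) (by norm_num)
  have hφhalf : ∀ q, φ q ≤ 1 / 2 := fun q => by rw [hφq]; exact min_le_right _ _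
  have hφψ : ∀ q, φ q ≤ ψ q := fun q => by rw [hφq]; exact min_le_left _ _
  have hφmono : Antitone φ := fun a b hab => by
    rw [hφq, hφq]; exact min_le_min (hψmono hab) le_rfl
  have hφdiv : ¬ Summable fun q : ℕ => φ q ^ (l + k) := by
    intro hφsum
    by_cases hc : ∀ q, 1 / 2 ≤ ψ q
    · have heq : (fun q : ℕ => φ q ^ (l + k)) = fun _ : ℕ => (1 / 2 : ℝ) ^ (l + k) := by
        funext q
        rw [hφq, min_eq_right (hc q)]
      rw [heq] at hφsum
      have h0 := hφsum.tendsto_atTop_zero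
      have h1 : ((1 : ℝ) / 2) ^ (l + k) = 0 := tendsto_nhds_unique tendsto_const_nhds h0
      have h2 : (0 : ℝ) < ((1 : ℝ) / 2) ^ (l + k) := by positivity
      linarith
    · push_neg at hc
      obtain ⟨q0, hq0⟩ := hc
      apply hdiv
      rw [← summable_nat_add_iff q0]
      have heq : (fun n : ℕ => ψ (n + q0) ^ (l + k)) = fun n : ℕ => φ (n + q0) ^ (l + k) := by
        funext n
        have h1 : ψ (n + q0) ≤ ψ q0 := hψmono (Nat.le_add_left _ _)
        rw [hφq, min_eq_left (by linarith)]
      rw [heq]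
      exact (summable_nat_add_iff q0).mpr hφsum
  obtain ⟨S, hSdef⟩ : ∃ f : ℕ → ℝ,
      f = fun q : ℕ => if distInt (fun i => (q : ℝ) * x i) < φ q then φ q ^ k else 0 := ⟨_, rfl⟩
  have hSq : ∀ q : ℕ,
      S q = if distInt (fun i => (q : ℝ) * x i) < φ q then φ q ^ k else 0 := fun q => by
    rw [hSdef]
  have hS0 : ∀ q, 0 ≤ S q := by
    intro q
    rw [hSq]
    split
    · exact pow_nonneg (hφpos q).le k
    · exact le_rfl
  have hSsum : Summable S := by
    refine Summable.of_nonneg_of_le hS0 ?_ hsum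
    intro q
    rw [hSq]
    split
    · rename_i h
      rw [if_pos (h.trans_le (hφψ q))]
      exact pow_le_pow_left₀ (hφpos q).le (hφψ q) k
    · split
      · exact pow_nonneg (hψpos q).le k
      · exact le_rfl
  obtain ⟨C, hCdef⟩ : ∃ c : ℝ, c = ∑' q, S q := ⟨_, rfl⟩
  have hpartial : ∀ s : Finset ℕ, ∑ q ∈ s, S q ≤ C := by
    intro s
    rw [hCdef]
    exact Summable.sum_le_tsum s (fun i _ => hS0 i) hSsum
  obtain ⟨δ, hδdef⟩ : ∃ f : ℕ → ℝ, f = fun T => φ (2 ^ T) := ⟨_, rfl⟩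
  have hδT : ∀ T, δ T = φ (2 ^ T) := fun T => by rw [hδdef]
  have hδpos : ∀ T, 0 < δ T := fun T => by rw [hδT]; exact hφpos _
  have hδhalf : ∀ T, δ T ≤ 1 / 2 := fun T => by rw [hδT]; exact hφhalf _
  have hδmono : ∀ T, δ (T + 1) ≤ δ T := fun T => by
    rw [hδT, hδT]
    exact hφmono (Nat.pow_le_pow_right (by norm_num) (Nat.le_succ T))
  obtain ⟨cnt, hcntdef⟩ : ∃ f : ℕ → ℕ, f = fun T => (((Finset.Ioc 0 (2 ^ T)).filter
      fun q : ℕ => distInt (fun i => (q : ℝ) * x i) < δ T)).card := ⟨_, rfl⟩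
  have hcntT : ∀ T, cnt T = (((Finset.Ioc 0 (2 ^ T)).filter
      fun q : ℕ => distInt (fun i => (q : ℝ) * x i) < δ T)).card := fun T => by rw [hcntdef]
  obtain ⟨G, hGdef⟩ : ∃ f : ℕ → ℝ, f = fun T => ∑ q ∈ Finset.Ioc 0 (2 ^ T), S q := ⟨_, rfl⟩
  have hGT : ∀ T, G T = ∑ q ∈ Finset.Ioc 0 (2 ^ T), S q := fun T => by rw [hGdef]
  obtain ⟨γ, hγdef⟩ : ∃ c : ℝ, c = ((k : ℝ) / ((l : ℝ) + k)) / 2 ^ l := ⟨_, rfl⟩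
  have hlk : (0 : ℝ) < (l : ℝ) + k := by positivity
  have hkpos : (0 : ℝ) < (k : ℝ) := by exact_mod_cast hk
  have hp2 : (0 : ℝ) < (2 : ℝ) ^ l := by positivity
  have hγpos : 0 < γ := by
    rw [hγdef]
    exact div_pos (div_pos hkpos hlk) hp2
  have hfrac1 : (k : ℝ) / ((l : ℝ) + k) ≤ 1 := by
    rw [div_le_one hlk]
    have : (0 : ℝ) ≤ (l : ℝ) := Nat.cast_nonneg l
    linarith
  have ht0 : γ * 2 ^ l = (k : ℝ) / ((l : ℝ) + k) := by
    rw [hγdef]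
    field_simp
  have hcnt_low : ∀ T, (2 : ℝ) ^ T * δ T ^ l ≤ 2 ^ l * ((cnt T : ℝ) + 1) := by
    intro T
    have h := count_lower x (hδpos T) (le_trans (hδhalf T) (by norm_num)) (2 ^ T)
    push_cast at h
    rw [← hcntT] at h
    have h2 : (2 : ℝ) ^ T * δ T ^ l / 2 ^ l ≤ (cnt T : ℝ) + 1 := by linarith
    rw [div_le_iff₀ hp2] at h2
    linarith
  obtain ⟨u, hudef⟩ : ∃ f : ℕ → ℝ,
      f = fun N => G N - δ N ^ k * (cnt N : ℝ) + γ * 2 ^ N * δ N ^ (l + k) - δ N ^ k := ⟨_, rfl⟩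
  have huN : ∀ N, u N = G N - δ N ^ k * (cnt N : ℝ) + γ * 2 ^ N * δ N ^ (l + k) - δ N ^ k :=
    fun N => by rw [hudef]
  have hstep : ∀ N, u N + γ * 2 ^ N * δ (N + 1) ^ (l + k) ≤ u (N + 1) := by
    intro N
    have hQle : (2 : ℕ) ^ N ≤ 2 ^ (N + 1) := Nat.pow_le_pow_right (by norm_num) (Nat.le_succ N)
    have hba : δ (N + 1) ≤ δ N := hδmono N
    have hb : 0 < δ (N + 1) := hδpos _
    have ha : 0 < δ N := hδpos _
    have hGdiff : G (N + 1) - G N = ∑ q ∈ Finset.Ioc (2 ^ N) (2 ^ (N + 1)), S q := by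
      have h := Finset.sum_Ioc_consecutive S (Nat.zero_le (2 ^ N)) hQle
      rw [hGT, hGT]
      linarith
    obtain ⟨D, hDdef⟩ : ∃ s : Finset ℕ, s = (Finset.Ioc (2 ^ N) (2 ^ (N + 1))).filter
        (fun q : ℕ => distInt (fun i => (q : ℝ) * x i) < δ (N + 1)) := ⟨_, rfl⟩
    have hsplit : cnt (N + 1) ≤ cnt N + D.card := by
      have hsub : ((Finset.Ioc 0 (2 ^ (N + 1))).filter
          (fun q : ℕ => distInt (fun i => (q : ℝ) * x i) < δ (N + 1))) ⊆
          ((Finset.Ioc 0 (2 ^ N)).filter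
            (fun q : ℕ => distInt (fun i => (q : ℝ) * x i) < δ N)) ∪ D := by
        intro q hq
        rw [Finset.mem_filter, Finset.mem_Ioc] at hq
        rw [Finset.mem_union, Finset.mem_filter, hDdef, Finset.mem_filter]
        by_cases hqN : q ≤ 2 ^ N
        · exact Or.inl ⟨Finset.mem_Ioc.mpr ⟨hq.1.1, hqN⟩, lt_of_lt_of_le hq.2 hba⟩
        · exact Or.inr ⟨Finset.mem_Ioc.mpr ⟨by omega, hq.1.2⟩, hq.2⟩
      calc cnt (N + 1) ≤ (((Finset.Ioc 0 (2 ^ N)).filter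
            (fun q : ℕ => distInt (fun i => (q : ℝ) * x i) < δ N)) ∪ D).card := by
            rw [hcntT]
            exact Finset.card_le_card hsub
        _ ≤ cnt N + D.card := by
            rw [hcntT]
            exact Finset.card_union_le _ _
    have hDsum : δ (N + 1) ^ k * (D.card : ℝ) ≤ ∑ q ∈ Finset.Ioc (2 ^ N) (2 ^ (N + 1)), S q := by
      have h1 : ∀ q ∈ D, δ (N + 1) ^ k ≤ S q := by
        intro q hq
        rw [hDdef, Finset.mem_filter, Finset.mem_Ioc] at hq
        have hφq' : δ (N + 1) ≤ φ q := by
          rw [hδT]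
          exact hφmono hq.1.2
        have hcond : distInt (fun i => (q : ℝ) * x i) < φ q := lt_of_lt_of_le hq.2 hφq'
        rw [hSq, if_pos hcond]
        exact pow_le_pow_left₀ hb.le hφq' k
      calc δ (N + 1) ^ k * (D.card : ℝ) = ∑ _q ∈ D, δ (N + 1) ^ k := by
            rw [Finset.sum_const, nsmul_eq_mul]; ring
        _ ≤ ∑ q ∈ D, S q := Finset.sum_le_sum h1
        _ ≤ ∑ q ∈ Finset.Ioc (2 ^ N) (2 ^ (N + 1)), S q := by
            rw [hDdef]
            exact Finset.sum_le_sum_of_subset_of_nonneg (Finset.filter_subset _ _)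
              (fun q _ _ => hS0 q)
    have h1 : δ (N + 1) ^ k * ((cnt (N + 1) : ℝ) - (cnt N : ℝ)) ≤ G (N + 1) - G N := by
      rw [hGdiff]
      have hc : ((cnt (N + 1) : ℝ)) - (cnt N : ℝ) ≤ (D.card : ℝ) := by
        have h' : (cnt (N + 1) : ℝ) ≤ (cnt N : ℝ) + (D.card : ℝ) := by exact_mod_cast hsplit
        linarith
      calc δ (N + 1) ^ k * ((cnt (N + 1) : ℝ) - (cnt N : ℝ)) ≤ δ (N + 1) ^ k * (D.card : ℝ) :=
            mul_le_mul_of_nonneg_left hc (pow_nonneg hb.le k)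
        _ ≤ _ := hDsum
    have h3 : δ (N + 1) ^ k ≤ δ N ^ k := pow_le_pow_left₀ hb.le hba k
    have h4 := key_pow_ineq k l hk hl hb.le hba
    have e2 : (k : ℝ) / ((l : ℝ) + k) * (δ N ^ (l + k) - δ (N + 1) ^ (l + k)) ≤
        δ N ^ l * (δ N ^ k - δ (N + 1) ^ k) := by
      rw [div_mul_eq_mul_div, div_le_iff₀ hlk]
      linarith
    have hp1 : (0 : ℝ) < (2 : ℝ) ^ N := by positivity
    -- main estimate without divisions
    have emain : γ * 2 ^ N * (δ N ^ (l + k) - δ (N + 1) ^ (l + k)) ≤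
        ((cnt N : ℝ) + 1) * (δ N ^ k - δ (N + 1) ^ k) := by
      refine le_of_mul_le_mul_left ?_ hp2
      have t3 : (2 : ℝ) ^ N * ((k : ℝ) / ((l : ℝ) + k) * (δ N ^ (l + k) - δ (N + 1) ^ (l + k))) ≤
          (2 : ℝ) ^ N * (δ N ^ l * (δ N ^ k - δ (N + 1) ^ k)) :=
        mul_le_mul_of_nonneg_left e2 hp1.le
      have t4 : (2 : ℝ) ^ N * δ N ^ l * (δ N ^ k - δ (N + 1) ^ k) ≤
          2 ^ l * ((cnt N : ℝ) + 1) * (δ N ^ k - δ (N + 1) ^ k) :=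
        mul_le_mul_of_nonneg_right (hcnt_low N) (by linarith)
      have t1 : (2 : ℝ) ^ l * (γ * 2 ^ N * (δ N ^ (l + k) - δ (N + 1) ^ (l + k))) =
          (2 : ℝ) ^ N * ((k : ℝ) / ((l : ℝ) + k) * (δ N ^ (l + k) - δ (N + 1) ^ (l + k))) := by
        rw [← ht0]; ring
      rw [t1]
      calc (2 : ℝ) ^ N * ((k : ℝ) / ((l : ℝ) + k) * (δ N ^ (l + k) - δ (N + 1) ^ (l + k)))
          ≤ (2 : ℝ) ^ N * (δ N ^ l * (δ N ^ k - δ (N + 1) ^ k)) := t3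
        _ = (2 : ℝ) ^ N * δ N ^ l * (δ N ^ k - δ (N + 1) ^ k) := by ring
        _ ≤ 2 ^ l * ((cnt N : ℝ) + 1) * (δ N ^ k - δ (N + 1) ^ k) := t4
        _ = 2 ^ l * (((cnt N : ℝ) + 1) * (δ N ^ k - δ (N + 1) ^ k)) := by ring
    have hpow : (2 : ℝ) ^ (N + 1) = 2 * 2 ^ N := by ring
    rw [huN N, huN (N + 1), hpow]
    nlinarith [h1, emain]
  have haccum : ∀ N, u 0 + ∑ T ∈ Finset.range N, γ * 2 ^ T * δ (T + 1) ^ (l + k) ≤ u N := by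
    intro N
    induction N with
    | zero => simp
    | succ n ih =>
      rw [Finset.sum_range_succ]
      have := hstep n
      linarith
  have hu_up : ∀ N, u N ≤ C := by
    intro N
    have hGC : G N ≤ C := by rw [hGT]; exact hpartial _
    have hδk1 : δ N ^ k ≤ 1 := pow_le_one₀ (hδpos N).le (by linarith [hδhalf N])
    have hδknn : (0 : ℝ) ≤ δ N ^ k := pow_nonneg (hδpos N).le k
    have hp1 : (0 : ℝ) < (2 : ℝ) ^ N := by positivity
    have emain : γ * 2 ^ N * δ N ^ (l + k) ≤ ((cnt N : ℝ) + 1) * δ N ^ k := by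
      refine le_of_mul_le_mul_left ?_ hp2
      have t1 : (2 : ℝ) ^ l * (γ * 2 ^ N * δ N ^ (l + k)) =
          (k : ℝ) / ((l : ℝ) + k) * (2 ^ N * δ N ^ (l + k)) := by
        rw [← ht0]; ring
      have t2 : (k : ℝ) / ((l : ℝ) + k) * (2 ^ N * δ N ^ (l + k)) ≤
          1 * (2 ^ N * δ N ^ (l + k)) := by
        refine mul_le_mul_of_nonneg_right hfrac1 ?_
        exact mul_nonneg hp1.le (pow_nonneg (hδpos N).le _)
      have t3 : (2 : ℝ) ^ N * δ N ^ (l + k) = (2 : ℝ) ^ N * δ N ^ l * δ N ^ k := by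
        rw [pow_add]; ring
      have t4 : (2 : ℝ) ^ N * δ N ^ l * δ N ^ k ≤ 2 ^ l * ((cnt N : ℝ) + 1) * δ N ^ k :=
        mul_le_mul_of_nonneg_right (hcnt_low N) hδknn
      rw [t1]
      calc (k : ℝ) / ((l : ℝ) + k) * (2 ^ N * δ N ^ (l + k))
          ≤ 1 * (2 ^ N * δ N ^ (l + k)) := t2
        _ = (2 : ℝ) ^ N * δ N ^ l * δ N ^ k := by rw [one_mul, t3]
        _ ≤ 2 ^ l * ((cnt N : ℝ) + 1) * δ N ^ k := t4
        _ = 2 ^ l * (((cnt N : ℝ) + 1) * δ N ^ k) := by ring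
    rw [huN N]
    nlinarith [emain, hGC, hδk1, hδknn]
  have hu0 : -2 ≤ u 0 := by
    have hG0 : (0 : ℝ) ≤ G 0 := by
      rw [hGT]
      exact Finset.sum_nonneg fun q _ => hS0 q
    have hc0 : cnt 0 ≤ 1 := by
      rw [hcntT]
      calc (((Finset.Ioc 0 (2 ^ 0)).filter
            fun q : ℕ => distInt (fun i => (q : ℝ) * x i) < δ 0)).card
          ≤ (Finset.Ioc 0 (2 ^ 0)).card := Finset.card_filter_le _ _
        _ = 1 := by simp
    have hδ01 : δ 0 ^ k ≤ 1 := pow_le_one₀ (hδpos 0).le (by linarith [hδhalf 0])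
    have hδ0nn : (0 : ℝ) ≤ δ 0 ^ k := pow_nonneg (hδpos 0).le k
    have hcc : δ 0 ^ k * (cnt 0 : ℝ) ≤ 1 := by
      have h' : (cnt 0 : ℝ) ≤ 1 := by exact_mod_cast hc0
      nlinarith
    have hγt : (0 : ℝ) ≤ γ * 2 ^ 0 * δ 0 ^ (l + k) :=
      mul_nonneg (mul_nonneg hγpos.le (by positivity)) (pow_nonneg (hδpos 0).le _)
    rw [huN 0]
    linarith [hG0, hcc, hγt, hδ01]
  have hbound : ∀ N, ∑ T ∈ Finset.range N, γ * 2 ^ T * δ (T + 1) ^ (l + k) ≤ C + 2 := by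
    intro N
    have h1 := haccum N
    have h2 := hu_up N
    linarith
  have hcond_sum : Summable (fun T : ℕ => (2 : ℝ) ^ T * φ (2 ^ T) ^ (l + k)) := by
    apply summable_of_sum_range_le (c := φ (2 ^ 0) ^ (l + k) + (2 / γ) * (C + 2))
    · intro n
      exact mul_nonneg (by positivity) (pow_nonneg (hφpos _).le _)
    · intro n
      show ∑ T ∈ Finset.range n, (2 : ℝ) ^ T * φ (2 ^ T) ^ (l + k) ≤
        φ (2 ^ 0) ^ (l + k) + (2 / γ) * (C + 2)
      have hsub : ∑ T ∈ Finset.range n, (2 : ℝ) ^ T * φ (2 ^ T) ^ (l + k) ≤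
          ∑ T ∈ Finset.range (n + 1), (2 : ℝ) ^ T * φ (2 ^ T) ^ (l + k) := by
        refine Finset.sum_le_sum_of_subset_of_nonneg
          (Finset.range_subset_range.mpr (Nat.le_succ n)) (fun i _ _ => ?_)
        exact mul_nonneg (by positivity) (pow_nonneg (hφpos _).le _)
      have hshift : ∑ T ∈ Finset.range (n + 1), (2 : ℝ) ^ T * φ (2 ^ T) ^ (l + k)
          = (∑ T ∈ Finset.range n, (2 : ℝ) ^ (T + 1) * φ (2 ^ (T + 1)) ^ (l + k))
            + (2 : ℝ) ^ 0 * φ (2 ^ 0) ^ (l + k) := by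
        rw [Finset.sum_range_succ']
      have hmain : ∑ T ∈ Finset.range n, (2 : ℝ) ^ (T + 1) * φ (2 ^ (T + 1)) ^ (l + k) ≤
          (2 / γ) * (C + 2) := by
        have hγ0 : γ ≠ 0 := ne_of_gt hγpos
        have heq : ∀ T : ℕ, (2 : ℝ) ^ (T + 1) * φ (2 ^ (T + 1)) ^ (l + k)
            = (2 / γ) * (γ * 2 ^ T * δ (T + 1) ^ (l + k)) := by
          intro T
          rw [hδT]
          field_simp
          ring
        rw [Finset.sum_congr rfl (fun T _ => heq T), ← Finset.mul_sum]
        have h2γ : (0 : ℝ) ≤ 2 / γ := by positivity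
        exact mul_le_mul_of_nonneg_left (hbound n) h2γ
      rw [hshift] at hsub
      calc ∑ T ∈ Finset.range n, (2 : ℝ) ^ T * φ (2 ^ T) ^ (l + k)
          ≤ (∑ T ∈ Finset.range n, (2 : ℝ) ^ (T + 1) * φ (2 ^ (T + 1)) ^ (l + k))
            + (2 : ℝ) ^ 0 * φ (2 ^ 0) ^ (l + k) := hsub
        _ ≤ (2 / γ) * (C + 2) + (2 : ℝ) ^ 0 * φ (2 ^ 0) ^ (l + k) :=
            by linarith [hmain]
        _ = φ (2 ^ 0) ^ (l + k) + (2 / γ) * (C + 2) := by ring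
  refine hφdiv ?_
  refine (summable_condensed_iff_of_nonneg (fun n => ?_) (fun m n _ hmn => ?_)).mp hcond_sum
  · exact pow_nonneg (hφpos n).le _
  · exact pow_le_pow_left₀ (hφpos n).le (hφmono hmn) (l + k)
end

section
/- Let ψ : N → R^+ be nonincreasing with ∑_{q∈N} ψ(q)^d divergent, where all values ψ(q) are of the form 2^{−m} for some m ∈ N. Then for any x ∈ R^ℓ (with ℓ + k = d, k ≥ 1), ∑_{m∈N} ψ(2^m)^k · #{2^{m−1} < q ≤ 2^m : ‖qx‖ < ψ(2^m)} = ∞. -/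
open scoped Classical

lemma distInt_le {l : ℕ} (x : Fin l → ℝ) (p : Fin l → ℤ) :
    distInt x ≤ ‖x - fun i => (p i : ℝ)‖ :=
  ciInf_le ⟨0, fun y ⟨q, hq⟩ => hq ▸ norm_nonneg _⟩ p

lemma pigeon {l : ℕ} (x : Fin l → ℝ) (c Q : ℕ) :
    Q + 1 ≤ 2 ^ (c * l) *
      (2 + ((Finset.Icc 1 Q).filter fun q : ℕ =>
        distInt (fun i => (q : ℝ) * x i) < (2:ℝ) ^ (-(c:ℤ))).card) := by
  have h2c : (0:ℝ) < 2 ^ c := by positivity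
  have hFlt : ∀ (q : ℕ) (i : Fin l), (⌊Int.fract ((q:ℝ) * x i) * 2 ^ c⌋).toNat < 2 ^ c := by
    intro q i
    have h1 : Int.fract ((q:ℝ) * x i) * 2 ^ c < 2 ^ c := by
      have := Int.fract_lt_one ((q:ℝ) * x i)
      nlinarith
    have h2 : (⌊Int.fract ((q:ℝ) * x i) * 2 ^ c⌋) < (2:ℤ) ^ c := by
      rw [Int.floor_lt]; push_cast; exact h1
    have h3 : ((2^c : ℕ) : ℤ) = (2:ℤ)^c := by push_cast; ring
    have h4 : 0 ≤ ⌊Int.fract ((q:ℝ) * x i) * 2 ^ c⌋ :=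
      Int.floor_nonneg.mpr (mul_nonneg (Int.fract_nonneg _) (by positivity))
    omega
  set F : ℕ → (Fin l → Fin (2 ^ c)) := fun q i => ⟨_, hFlt q i⟩ with hF
  have hcard : (Finset.univ : Finset (Fin l → Fin (2 ^ c))).card = 2 ^ (c * l) := by
    simp [Fintype.card_fun, pow_mul]
  set D := 2 ^ (c * l) with hD
  set n := (Q + 1) / D with hn
  have hDpos : 0 < D := Nat.pow_pos (by norm_num)
  obtain ⟨b, -, hb⟩ := Finset.exists_le_card_fiber_of_mul_le_card_of_maps_to
    (s := Finset.range (Q+1)) (t := Finset.univ) (f := F) (n := n)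
    (fun a _ => Finset.mem_univ _) Finset.univ_nonempty
    (by rw [hcard, Finset.card_range]; exact Nat.mul_div_le _ _)
  set S := {q ∈ Finset.range (Q+1) | F q = b} with hS
  -- key: Q+1 < D * (n+1)
  have hQlt : Q + 1 < D * (n + 1) := by
    have h1 : D * n + (Q+1) % D = Q + 1 := by rw [hn]; exact Nat.div_add_mod _ _
    have h2 : (Q+1) % D < D := Nat.mod_lt _ hDpos
    have h3 : D * (n + 1) = D * n + D := by ring
    omega
  -- suffices: n ≤ 1 + card filtered
  set T := ((Finset.Icc 1 Q).filter fun q : ℕ =>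
        distInt (fun i => (q : ℝ) * x i) < (2:ℝ) ^ (-(c:ℤ))) with hT
  suffices hsuff : n ≤ 1 + T.card by
    calc Q + 1 ≤ D * (n + 1) := hQlt.le
    _ ≤ D * (2 + T.card) := by
        apply Nat.mul_le_mul_left; omega
  rcases Nat.eq_zero_or_pos n with h0 | hnpos
  · omega
  have hSne : S.Nonempty := Finset.card_pos.mp (lt_of_lt_of_le hnpos hb)
  set q0 := S.min' hSne with hq0
  have hq0S : q0 ∈ S := S.min'_mem hSne
  -- the key distance fact
  have hdist : ∀ q ∈ S, q0 < q →
      distInt (fun i => (((q - q0 : ℕ)) : ℝ) * x i) < (2:ℝ) ^ (-(c:ℤ)) := by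
    intro q hqS hlt
    have hFeq : F q = F q0 := by
      have h1 : F q = b := (Finset.mem_filter.mp hqS).2
      have h2 : F q0 = b := (Finset.mem_filter.mp hq0S).2
      rw [h1, h2]
    set p : Fin l → ℤ := fun i => ⌊(q:ℝ) * x i⌋ - ⌊(q0:ℝ) * x i⌋ with hp
    have key : ∀ i, |(((q - q0 : ℕ)) : ℝ) * x i - (p i : ℝ)| < (2:ℝ) ^ (-(c:ℤ)) := by
      intro i
      have hfl : ⌊Int.fract ((q:ℝ) * x i) * 2 ^ c⌋ = ⌊Int.fract ((q0:ℝ) * x i) * 2 ^ c⌋ := by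
        have := congrFun hFeq i
        simp only [hF, Fin.mk.injEq] at this
        have hnn1 : 0 ≤ ⌊Int.fract ((q:ℝ) * x i) * 2 ^ c⌋ :=
          Int.floor_nonneg.mpr (mul_nonneg (Int.fract_nonneg _) (by positivity))
        have hnn2 : 0 ≤ ⌊Int.fract ((q0:ℝ) * x i) * 2 ^ c⌋ :=
          Int.floor_nonneg.mpr (mul_nonneg (Int.fract_nonneg _) (by positivity))
        omega
    -- same floor ⇒ difference < 1
      have habs : |Int.fract ((q:ℝ) * x i) * 2 ^ c - Int.fract ((q0:ℝ) * x i) * 2 ^ c| < 1 := by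
        rw [abs_sub_lt_iff]
        constructor
        · have h1 : Int.fract ((q:ℝ) * x i) * 2 ^ c < ⌊Int.fract ((q:ℝ) * x i) * 2 ^ c⌋ + 1 :=
            Int.lt_floor_add_one _
          have h2 : (⌊Int.fract ((q0:ℝ) * x i) * 2 ^ c⌋ : ℝ) ≤ Int.fract ((q0:ℝ) * x i) * 2 ^ c :=
            Int.floor_le _
          rw [hfl] at h1; linarith
        · have h1 : Int.fract ((q0:ℝ) * x i) * 2 ^ c < ⌊Int.fract ((q0:ℝ) * x i) * 2 ^ c⌋ + 1 :=
            Int.lt_floor_add_one _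
          have h2 : (⌊Int.fract ((q:ℝ) * x i) * 2 ^ c⌋ : ℝ) ≤ Int.fract ((q:ℝ) * x i) * 2 ^ c :=
            Int.floor_le _
          rw [hfl] at h2; linarith
      have hfr : |Int.fract ((q:ℝ) * x i) - Int.fract ((q0:ℝ) * x i)| < (2:ℝ) ^ (-(c:ℤ)) := by
        rw [← sub_mul, abs_mul, abs_of_pos h2c] at habs
        rw [zpow_neg, zpow_natCast]
        rwa [← lt_div_iff₀ h2c, one_div] at habs
      have hco : (((q - q0 : ℕ)) : ℝ) * x i - (p i : ℝ)
          = Int.fract ((q:ℝ) * x i) - Int.fract ((q0:ℝ) * x i) := by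
        have hsub : (((q - q0 : ℕ)) : ℝ) = (q:ℝ) - (q0:ℝ) := by
          have : q0 ≤ q := hlt.le
          push_cast [this]; ring
        rw [hsub, hp]
        rw [← Int.self_sub_floor, ← Int.self_sub_floor]
        push_cast
        ring
      rw [hco]; exact hfr
    have hlt2 : ‖(fun i => (((q - q0:ℕ)) : ℝ) * x i) - (fun i => (p i : ℝ))‖ < (2:ℝ) ^ (-(c:ℤ)) := by
      rw [pi_norm_lt_iff (by positivity)]
      intro i
      simpa [Real.norm_eq_abs] using key i
    exact lt_of_le_of_lt (distInt_le _ p) hlt2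
  -- injection from S.erase q0 into T
  have hcardle : (S.erase q0).card ≤ T.card := by
    apply Finset.card_le_card_of_injOn (fun q => q - q0)
    · intro q hq
      have hqS := Finset.mem_of_mem_erase hq
      have hne := Finset.ne_of_mem_erase hq
      have hlt : q0 < q := lt_of_le_of_ne (S.min'_le q hqS) (Ne.symm hne)
      have hqQ : q ≤ Q := by
        have := Finset.mem_range.mp (Finset.mem_filter.mp hqS).1
        omega
      rw [hT, Finset.mem_coe, Finset.mem_filter, Finset.mem_Icc]
      beta_reduce
      exact ⟨⟨by omega, by omega⟩, hdist q hqS hlt⟩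
    · intro a ha b' hb' hab
      have hab' : a - q0 = b' - q0 := hab
      have ha' : q0 < a := lt_of_le_of_ne (S.min'_le a (Finset.mem_of_mem_erase ha))
        (Ne.symm (Finset.ne_of_mem_erase ha))
      have hb'' : q0 < b' := lt_of_le_of_ne (S.min'_le b' (Finset.mem_of_mem_erase hb'))
        (Ne.symm (Finset.ne_of_mem_erase hb'))
      omega
  have : S.card - 1 ≤ T.card := by
    rw [← Finset.card_erase_of_mem hq0S]; exact hcardle
  omega

theorem stmt_4 (l k d : ℕ) (hk : 1 ≤ k) (hd : d = l + k)
    (ψ : ℕ → ℝ) (hψpos : ∀ q, 0 < ψ q) (hψmono : Antitone ψ)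
    (hdyadic : ∀ q, ∃ m : ℕ, ψ q = (2 : ℝ) ^ (-(m : ℤ)))
    (hdiv : ¬ Summable fun q : ℕ => ψ q ^ d) (x : Fin l → ℝ) :
    ¬ Summable fun m : ℕ =>
      ψ (2 ^ m) ^ k *
        (((Finset.Ioc (2 ^ (m - 1)) (2 ^ m)).filter fun q : ℕ =>
          distInt (fun i => (q : ℝ) * x i) < ψ (2 ^ m)).card : ℝ) := by
  intro hS
  set δ : ℕ → ℝ := fun m => ψ (2 ^ m) with hδdef
  have hδpos : ∀ m, 0 < δ m := fun m => hψpos _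
  have hδanti : ∀ {a b : ℕ}, a ≤ b → δ b ≤ δ a :=
    fun h => hψmono (Nat.pow_le_pow_right (by norm_num) h)
  choose cf hcf0 using fun m => hdyadic (2 ^ m)
  have hcf : ∀ m, δ m = (2:ℝ) ^ (-(cf m : ℤ)) := fun m => hcf0 m
  have hδle1 : ∀ m, δ m ≤ 1 := by
    intro m
    rw [hcf m]
    exact zpow_le_one_of_nonpos₀ one_le_two (by omega)
  set N : ℕ → ℕ := fun m =>
    ((Finset.Ioc (2 ^ (m - 1)) (2 ^ m)).filter fun q : ℕ =>
      distInt (fun i => (q : ℝ) * x i) < δ m).card with hNdef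
  set g : ℕ → ℝ := fun m => δ m ^ k * (N m : ℝ) with hgdef
  have hSg : Summable g := hS
  have hgnonneg : ∀ m, 0 ≤ g m := fun m =>
    mul_nonneg (pow_nonneg (hδpos m).le k) (Nat.cast_nonneg _)
  set B : ℕ → ℕ := fun M => ∑ i ∈ Finset.range M, N (i + 1) with hBdef
  have hBs : ∀ n, B (n + 1) = B n + N (n + 1) := fun n => Finset.sum_range_succ _ _
  -- the count over all of (0, 2^M] is at most 1 + B M
  have hA : ∀ M : ℕ,
      (((Finset.Icc 1 (2 ^ M)).filter fun q : ℕ =>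
        distInt (fun i => (q : ℝ) * x i) < δ M).card) ≤ 1 + B M := by
    intro M
    induction M with
    | zero =>
      have h1 : (Finset.Icc 1 (2 ^ 0)) = {1} := by decide
      rw [h1]
      calc (Finset.filter _ {1}).card ≤ ({1} : Finset ℕ).card := Finset.card_filter_le _ _
        _ = 1 := rfl
        _ ≤ 1 + B 0 := Nat.le_add_right _ _
    | succ M ih =>
      have hIcc : ∀ n : ℕ, Finset.Icc 1 (2 ^ n) = Finset.Ioc 0 (2 ^ n) := by
        intro n; rw [← Finset.Icc_add_one_left_eq_Ioc]; rfl
      have hun : Finset.Ioc (0:ℕ) (2 ^ (M+1)) =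
          Finset.Ioc 0 (2 ^ M) ∪ Finset.Ioc (2 ^ M) (2 ^ (M+1)) :=
        (Finset.Ioc_union_Ioc_eq_Ioc (Nat.zero_le _)
          (Nat.pow_le_pow_right (by norm_num) (Nat.le_succ M))).symm
      rw [hIcc, hun, Finset.filter_union]
      calc (Finset.filter _ _ ∪ Finset.filter _ _).card
          ≤ (Finset.filter (fun q : ℕ =>
              distInt (fun i => (q : ℝ) * x i) < δ (M+1)) (Finset.Ioc 0 (2 ^ M))).card
            + (Finset.filter (fun q : ℕ =>
              distInt (fun i => (q : ℝ) * x i) < δ (M+1)) (Finset.Ioc (2^M) (2 ^ (M+1)))).card :=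
            Finset.card_union_le _ _
        _ ≤ 1 + B M + N (M+1) := by
            apply Nat.add_le_add
            · calc (Finset.filter _ _).card
                  ≤ (Finset.filter (fun q : ℕ =>
                    distInt (fun i => (q : ℝ) * x i) < δ M) (Finset.Ioc 0 (2 ^ M))).card := by
                    apply Finset.card_le_card
                    apply Finset.monotone_filter_right
                    intro q _ hq
                    exact lt_of_lt_of_le hq (hδanti (Nat.le_succ M))
                _ ≤ 1 + B M := by rw [← hIcc]; exact ih
            · exact le_of_eq rfl
        _ = 1 + B (M+1) := by rw [hBs]; ring
  -- pigeonhole lower bound on B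
  have key1 : ∀ M : ℕ, (2:ℝ) ^ M * δ M ^ l ≤ (B M : ℝ) + 3 := by
    intro M
    have hp := pigeon x (cf M) (2 ^ M)
    have hδl : δ M ^ l = ((2:ℝ) ^ (cf M * l))⁻¹ := by
      rw [hcf M, ← zpow_natCast ((2:ℝ) ^ (-(cf M : ℤ))) l, ← zpow_mul,
        ← zpow_natCast (2:ℝ) (cf M * l), ← zpow_neg]
      congr 1
      push_cast
      ring
    -- rewrite the filter in hp to use δ M
    rw [← hcf M] at hp
    have hA' := hA M
    have hcast : ((2:ℝ) ^ M + 1) ≤ (2:ℝ) ^ (cf M * l) * (2 + ((1:ℝ) + (B M : ℝ))) := by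
      have h2 : ((Finset.Icc 1 (2 ^ M)).filter fun q : ℕ =>
          distInt (fun i => (q : ℝ) * x i) < δ M).card ≤ 1 + B M := hA'
      have := le_trans hp (Nat.mul_le_mul_left _ (by omega :
        2 + ((Finset.Icc 1 (2 ^ M)).filter fun q : ℕ =>
          distInt (fun i => (q : ℝ) * x i) < δ M).card ≤ 2 + (1 + B M)))
      calc ((2:ℝ) ^ M + 1) = ((2 ^ M + 1 : ℕ) : ℝ) := by push_cast; ring
        _ ≤ ((2 ^ (cf M * l) * (2 + (1 + B M)) : ℕ) : ℝ) := Nat.cast_le.mpr this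
        _ = (2:ℝ) ^ (cf M * l) * (2 + ((1:ℝ) + (B M : ℝ))) := by push_cast; ring
    have hE : (0:ℝ) < 2 ^ (cf M * l) := by positivity
    rw [hδl]
    have h3 : (2:ℝ) ^ M * ((2:ℝ) ^ (cf M * l))⁻¹ ≤ 2 + (1 + (B M : ℝ)) := by
      rw [mul_inv_le_iff₀ hE]
      nlinarith [hcast]
    linarith
  -- real sequences
  set u : ℕ → ℝ := fun m => 2 ^ m * δ m ^ d with hudef
  set v : ℕ → ℝ := fun m => (δ m ^ k - δ (m+1) ^ k) * (2 ^ m * δ m ^ l) with hvdef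
  have hδkd : ∀ m : ℕ, δ m ^ k * (2 ^ m * δ m ^ l) = u m := by
    intro m
    rw [hudef]
    simp only [hd, pow_add]
    ring
  have hdiffnn : ∀ m, 0 ≤ δ m ^ k - δ (m+1) ^ k := by
    intro m
    have := pow_le_pow_left₀ (hδpos (m+1)).le (hδanti (Nat.le_succ m)) k
    linarith
  have hunn : ∀ m, 0 ≤ u m := fun m =>
    mul_nonneg (by positivity) (pow_nonneg (hδpos m).le d)
  have hvnn : ∀ m, 0 ≤ v m := fun m =>
    mul_nonneg (hdiffnn m) (mul_nonneg (by positivity) (pow_nonneg (hδpos m).le l))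
  -- Abel identity
  have abel : ∀ n : ℕ, (∑ i ∈ Finset.range (n+1), g (i+1)) =
      (∑ i ∈ Finset.range n, (δ (i+1) ^ k - δ (i+2) ^ k) * (B (i+1) : ℝ))
        + δ (n+1) ^ k * (B (n+1) : ℝ) := by
    intro n
    induction n with
    | zero => simp [hgdef, hBs, hBdef]
    | succ n ih =>
      rw [Finset.sum_range_succ, ih, Finset.sum_range_succ]
      have hB2 : (B (n+2) : ℝ) = (B (n+1) : ℝ) + (N (n+2) : ℝ) := by
        rw [hBs (n+1)]; push_cast; ring
      have hg2 : g (n+2) = δ (n+2) ^ k * (N (n+2) : ℝ) := rfl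
      rw [hg2, hB2]
      ring
  -- run comparison
  have hstep : ∀ j : ℕ, 2 * u j ≤ 4 * v j + u (j+1) := by
    intro j
    have hmono : cf j ≤ cf (j+1) := by
      have h1 : δ (j+1) ≤ δ j := hδanti (Nat.le_succ j)
      rw [hcf j, hcf (j+1)] at h1
      have := (zpow_le_zpow_iff_right₀ (by norm_num : (1:ℝ) < 2)).mp h1
      omega
    rcases eq_or_lt_of_le hmono with heq | hlt
    · -- δ (j+1) = δ j
      have hδeq : δ (j+1) = δ j := by rw [hcf j, hcf (j+1), ← heq]
      have hu2 : u (j+1) = 2 * u j := by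
        rw [hudef]
        simp only [hδeq, pow_succ]
        ring
      have := hvnn j
      linarith
    · -- δ (j+1) ≤ δ j / 2
      have hhalf : δ (j+1) ≤ δ j / 2 := by
        rw [hcf j, hcf (j+1)]
        have h1 : (2:ℝ) ^ (-(cf (j+1) : ℤ)) ≤ (2:ℝ) ^ (-(cf j + 1 : ℤ)) :=
          zpow_le_zpow_right₀ one_le_two (by omega)
        have h2 : (2:ℝ) ^ (-(cf j + 1 : ℤ)) = (2:ℝ) ^ (-(cf j : ℤ)) / 2 := by
          rw [show (-(cf j + 1 : ℤ)) = -(cf j : ℤ) + (-1) by ring, zpow_add₀ (two_ne_zero),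
            zpow_neg_one]
          ring
        rw [h2] at h1
        exact h1
      have hkbd : δ (j+1) ^ k ≤ δ j ^ k / 2 := by
        calc δ (j+1) ^ k ≤ (δ j / 2) ^ k :=
              pow_le_pow_left₀ (hδpos (j+1)).le hhalf k
          _ = δ j ^ k / 2 ^ k := by rw [div_pow]
          _ ≤ δ j ^ k / 2 := by
              apply div_le_div_of_nonneg_left (pow_nonneg (hδpos j).le k) (by norm_num)
              exact le_self_pow₀ (by norm_num) (by omega)
      have hv : u j / 2 ≤ v j := by
        rw [hvdef, ← hδkd j]
        have h2 : (0:ℝ) ≤ 2 ^ j * δ j ^ l :=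
          mul_nonneg (by positivity) (pow_nonneg (hδpos j).le l)
        nlinarith [hδkd j]
      have := hunn (j+1)
      linarith
  have runs : ∀ n : ℕ, (∑ i ∈ Finset.range (n+1), u (i+1)) ≤
      4 * (∑ i ∈ Finset.range n, v (i+1)) + 2 * u (n+1) := by
    intro n
    induction n with
    | zero => simp [hunn 1]; linarith [hunn 1]
    | succ n ih =>
      rw [Finset.sum_range_succ (fun i => u (i+1)), Finset.sum_range_succ (fun i => v (i+1))]
      have := hstep (n+1)
      linarith
  -- telescoping
  have tel : ∀ n : ℕ, (∑ i ∈ Finset.range n, (δ (i+1) ^ k - δ (i+2) ^ k)) =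
      δ 1 ^ k - δ (n+1) ^ k := fun n => Finset.sum_range_sub' (fun i => δ (i+1) ^ k) n
  -- main lower bound
  have lower : ∀ n : ℕ, (∑ i ∈ Finset.range n, v (i+1)) + u (n+1) - 3 * δ 1 ^ k ≤
      (∑ i ∈ Finset.range (n+1), g (i+1)) := by
    intro n
    rw [abel n]
    have h1 : (∑ i ∈ Finset.range n, (v (i+1) - 3 * (δ (i+1) ^ k - δ (i+2) ^ k))) ≤
        (∑ i ∈ Finset.range n, (δ (i+1) ^ k - δ (i+2) ^ k) * (B (i+1) : ℝ)) := by
      apply Finset.sum_le_sum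
      intro i _
      have hb := key1 (i+1)
      have hc := hdiffnn (i+1)
      have : v (i+1) = (δ (i+1) ^ k - δ (i+2) ^ k) * (2 ^ (i+1) * δ (i+1) ^ l) := rfl
      nlinarith
    have h2 : u (n+1) - 3 * δ (n+1) ^ k ≤ δ (n+1) ^ k * (B (n+1) : ℝ) := by
      have hb := key1 (n+1)
      have hpk : (0:ℝ) ≤ δ (n+1) ^ k := pow_nonneg (hδpos _).le k
      have := hδkd (n+1)
      nlinarith
    have h3 : (∑ i ∈ Finset.range n, (v (i+1) - 3 * (δ (i+1) ^ k - δ (i+2) ^ k))) =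
        (∑ i ∈ Finset.range n, v (i+1)) - 3 * (δ 1 ^ k - δ (n+1) ^ k) := by
      rw [Finset.sum_sub_distrib, ← Finset.mul_sum, tel]
    rw [h3] at h1
    linarith
  -- final bound on partial sums of u
  have hg0 : g 0 = 0 := by
    have : N 0 = 0 := by
      rw [hNdef]
      simp
    rw [hgdef]
    simp [this]
  have hSle : ∀ n : ℕ, (∑ i ∈ Finset.range n, g (i+1)) ≤ ∑' m, g m := by
    intro n
    have h1 : (∑ i ∈ Finset.range (n+1), g i) =
        (∑ i ∈ Finset.range n, g (i+1)) + g 0 := Finset.sum_range_succ' g n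
    have h2 : (∑ i ∈ Finset.range (n+1), g i) ≤ ∑' m, g m :=
      hSg.sum_le_tsum _ (fun i _ => hgnonneg i)
    rw [h1, hg0] at h2
    linarith
  have hδ1k : δ 1 ^ k ≤ 1 := pow_le_one₀ (hδpos 1).le (hδle1 1)
  have hu0 : u 0 ≤ 1 := by
    have : δ 0 ^ d ≤ 1 := pow_le_one₀ (hδpos 0).le (hδle1 0)
    rw [hudef]
    simpa using this
  have husum : Summable u := by
    apply summable_of_sum_range_le (c := 4 * (∑' m, g m) + 13) hunn
    intro n
    match n with
    | 0 =>
      have : 0 ≤ ∑' m, g m := tsum_nonneg hgnonneg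
      simp
      linarith
    | Nat.succ m =>
      have h1 : (∑ i ∈ Finset.range (m+1), u i) =
          (∑ i ∈ Finset.range m, u (i+1)) + u 0 := Finset.sum_range_succ' u m
      have h2 : (∑ i ∈ Finset.range m, u (i+1)) ≤ (∑ i ∈ Finset.range (m+1), u (i+1)) := by
        rw [Finset.sum_range_succ]
        linarith [hunn (m+1)]
      have h3 := runs m
      have h4 := lower m
      have h5 := hSle (m+1)
      have h6 := hunn (m+1)
      rw [h1]
      nlinarith
  -- condensation
  have hcond : Summable (fun q : ℕ => ψ q ^ d) := by
    rw [← summable_condensed_iff_of_nonneg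
      (fun q => pow_nonneg (hψpos q).le d)
      (fun m n _ hmn => pow_le_pow_left₀ (hψpos n).le (hψmono hmn) d)]
    exact husum
  exact hdiv hcond
end

section
/- Let x ∈ R^{d−1}, let ψ : N → R^+ be nonincreasing, and let N ∈ N satisfy N^{−1/(d−1)} < ψ(N) < 1. Then every point of [0,1] lies in some ball B(p/q, 2/(q·N·ψ(N)^{d−1})) where 1 ≤ q ≤ N satisfies ‖qx‖ < ψ(N) and 0 ≤ p ≤ q. -/
open scoped Classical

noncomputable def shearMap (n : ℕ) (c : Fin (n+1) → ℝ) :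
    (Fin (n+1) → ℝ) →ₗ[ℝ] (Fin (n+1) → ℝ) where
  toFun v := fun j => v j - c j * v 0
  map_add' u v := by funext j; simp; ring
  map_smul' a v := by funext j; simp; ring

lemma shearMap_det (n : ℕ) (c : Fin (n+1) → ℝ) (hc : c 0 = 0) :
    LinearMap.det (shearMap n c) = 1 := by
  rw [← LinearMap.det_toMatrix' (shearMap n c)]
  have htri : (LinearMap.toMatrix' (shearMap n c)).BlockTriangular OrderDual.toDual := by
    intro i j hij
    replace hij : i < j := hij
    simp only [LinearMap.toMatrix'_apply, shearMap, LinearMap.coe_mk, AddHom.coe_mk]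
    have h1 : i ≠ j := hij.ne
    have h2 : (0 : Fin (n+1)) ≠ j := fun h => by subst h; simp at hij
    rw [Pi.single_apply, Pi.single_apply, if_neg h1, if_neg h2]
    ring
  rw [Matrix.det_of_lowerTriangular _ htri]
  apply Finset.prod_eq_one
  intro i _
  simp only [LinearMap.toMatrix'_apply, shearMap, LinearMap.coe_mk, AddHom.coe_mk]
  rw [Pi.single_eq_same, Pi.single_apply]
  by_cases h0 : i = 0
  · subst h0; rw [if_pos rfl, hc]; ring
  · rw [if_neg (Ne.symm h0)]; ring

open MeasureTheory Submodule in
lemma box_lattice_point (n : ℕ) (c r : Fin (n+1) → ℝ) (hc : c 0 = 0)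
    (hr : ∀ j, 0 < r j) (hvol : (2:ℝ) ^ (n+1) < ∏ j, (2 * r j)) :
    ∃ m : Fin (n+1) → ℤ, (¬ ∀ j, m j = 0) ∧
      ∀ j, |(m j : ℝ) - c j * (m 0 : ℝ)| ≤ r j := by
  classical
  set b := Pi.basisFun ℝ (Fin (n+1)) with hb
  set box : Set (Fin (n+1) → ℝ) := Set.univ.pi fun j => Set.Icc (-(r j)) (r j) with hbox
  set s : Set (Fin (n+1) → ℝ) := shearMap n c ⁻¹' box with hs
  have hdet : LinearMap.det (shearMap n c) ≠ 0 := by rw [shearMap_det n c hc]; norm_num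
  have hμF : volume (ZSpan.fundamentalDomain b) = 1 := by
    rw [hb, ZSpan.fundamentalDomain_pi_basisFun, volume_pi_pi]
    simp
  have hμs : volume s = ENNReal.ofReal (∏ j, (2 * r j)) := by
    rw [hs, Measure.addHaar_preimage_linearMap volume hdet, shearMap_det n c hc, hbox,
      volume_pi_pi]
    simp only [Real.volume_Icc, inv_one, abs_one, ENNReal.ofReal_one, one_mul]
    rw [← ENNReal.ofReal_prod_of_nonneg (fun j _ => by linarith [hr j])]
    congr 1
    exact Finset.prod_congr rfl fun j _ => by ring
  have hsymm : ∀ w ∈ s, -w ∈ s := by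
    intro w hw
    simp only [hs, Set.mem_preimage, map_neg, hbox, Set.mem_pi, Set.mem_univ, true_implies,
      Pi.neg_apply, Set.mem_Icc] at hw ⊢
    intro j
    obtain ⟨h1, h2⟩ := hw j
    constructor <;> linarith
  have hconv : Convex ℝ s :=
    (convex_pi fun i _ => convex_Icc _ _).linear_preimage _
  have hlt : volume (ZSpan.fundamentalDomain b) * 2 ^ (Module.finrank ℝ (Fin (n+1) → ℝ)) <
      volume s := by
    rw [hμF, one_mul, hμs, Module.finrank_fintype_fun_eq_card, Fintype.card_fin]
    calc (2:ENNReal) ^ (n+1) = ENNReal.ofReal ((2:ℝ) ^ (n+1)) := by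
          rw [ENNReal.ofReal_pow (by norm_num)]; norm_num
      _ < _ := (ENNReal.ofReal_lt_ofReal_iff (lt_trans (by positivity) hvol)).mpr hvol
  haveI : Countable ↥(span ℤ (Set.range ⇑b)).toAddSubgroup :=
    inferInstanceAs (Countable (span ℤ (Set.range ⇑b)))
  obtain ⟨v, hv0, hvs⟩ := exists_ne_zero_mem_lattice_of_measure_mul_two_pow_lt_measure
    (ZSpan.isAddFundamentalDomain' b volume) hsymm hconv hlt
  have hvmem : (v : Fin (n+1) → ℝ) ∈ span ℤ (Set.range b) := v.2
  have hrep := (b.mem_span_iff_repr_mem ℤ _).mp hvmem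
  simp only [hb, Pi.basisFun_repr] at hrep
  choose m hm using hrep
  simp only [algebraMap_int_eq, eq_intCast] at hm
  refine ⟨m, ?_, ?_⟩
  · intro hall
    apply hv0
    have : (v : Fin (n+1) → ℝ) = 0 := by
      funext j
      rw [← hm j, hall j]
      simp
    exact Subtype.ext this
  · intro j
    simp only [hs, Set.mem_preimage, hbox, Set.mem_pi, Set.mem_univ, true_implies,
      Set.mem_Icc] at hvs
    have := hvs j
    simp only [shearMap, LinearMap.coe_mk, AddHom.coe_mk] at this
    rw [← hm j, ← hm 0] at this
    rw [abs_le]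
    exact this


set_option maxHeartbeats 1000000 in
theorem stmt_9 (l d : ℕ) (hd : d = l + 1) (hd2 : 2 ≤ d) (x : Fin l → ℝ)
    (ψ : ℕ → ℝ) (hψpos : ∀ q, 0 < ψ q) (hψmono : Antitone ψ) (N : ℕ) (hN : 1 ≤ N)
    (hlow : (N : ℝ) ^ (-(1 / (l : ℝ))) < ψ N) (hup : ψ N < 1) :
    ∀ y ∈ Set.Icc (0 : ℝ) 1, ∃ q : ℕ, 1 ≤ q ∧ q ≤ N ∧
      distInt (fun i => (q : ℝ) * x i) < ψ N ∧
      ∃ p : ℕ, p ≤ q ∧ |y - (p : ℝ) / q| < 2 / ((q : ℝ) * N * ψ N ^ l) := by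
  rintro y ⟨hy0, hy1⟩
  have hl : 1 ≤ l := by omega
  have hl0 : (0:ℝ) < (l:ℝ) := by exact_mod_cast hl
  have hN0 : (0:ℝ) < (N:ℝ) := by exact_mod_cast hN
  have hψ0 : 0 < ψ N := hψpos N
  set t : ℝ := (N : ℝ) ^ (-(1 / (l : ℝ))) with ht_def
  have ht0 : 0 < t := Real.rpow_pos_of_pos hN0 _
  have hexp_neg : -(1 / (l:ℝ)) < 0 := by
    have : 0 < 1/(l:ℝ) := by positivity
    linarith
  set m0 : ℝ := max t (ψ N * (2:ℝ) ^ (-(1 / (l : ℝ)))) with hm0_def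
  have h2lt1 : (2:ℝ) ^ (-(1 / (l : ℝ))) < 1 :=
    Real.rpow_lt_one_of_one_lt_of_neg one_lt_two hexp_neg
  have h2pos : (0:ℝ) < (2:ℝ) ^ (-(1 / (l : ℝ))) := Real.rpow_pos_of_pos two_pos _
  have hm0lt : m0 < ψ N := by
    apply max_lt hlow
    nlinarith
  have hm00 : 0 < m0 := lt_of_lt_of_le ht0 (le_max_left _ _)
  set ψ' : ℝ := (m0 + ψ N) / 2 with hψ'_def
  have hψ'0 : 0 < ψ' := by positivity
  have hm0ψ' : m0 < ψ' := by simp only [hψ'_def]; linarith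
  have hψ'ψ : ψ' < ψ N := by simp only [hψ'_def]; linarith
  have hψ'1 : ψ' < 1 := hψ'ψ.trans hup
  -- key1 : 1 < N * ψ'^l
  have htψ' : t < ψ' := lt_of_le_of_lt (le_max_left _ _) hm0ψ'
  have htl : t ^ l = ((N:ℝ))⁻¹ := by
    rw [ht_def, ← Real.rpow_natCast ((N:ℝ) ^ (-(1 / (l : ℝ)))) l, ← Real.rpow_mul hN0.le]
    have : -(1 / (l:ℝ)) * (l:ℕ) = -1 := by field_simp
    rw [this, Real.rpow_neg_one]
  have key1 : 1 < (N:ℝ) * ψ' ^ l := by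
    have h1 : t ^ l < ψ' ^ l := pow_lt_pow_left₀ htψ' ht0.le (by omega)
    rw [htl] at h1
    rw [← inv_mul_cancel₀ hN0.ne']
    have := mul_lt_mul_of_pos_left h1 hN0
    linarith [mul_lt_mul_of_pos_left h1 hN0]
  -- key2 : ψ N ^ l < 2 * ψ'^l
  have key2 : ψ N ^ l < 2 * ψ' ^ l := by
    have h1 : ψ N * (2:ℝ) ^ (-(1 / (l : ℝ))) < ψ' := lt_of_le_of_lt (le_max_right _ _) hm0ψ'
    have h2 : (ψ N * (2:ℝ) ^ (-(1 / (l : ℝ)))) ^ l < ψ' ^ l :=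
      pow_lt_pow_left₀ h1 (by positivity) (by omega)
    have h3 : ((2:ℝ) ^ (-(1 / (l : ℝ)))) ^ l = (2:ℝ)⁻¹ := by
      rw [← Real.rpow_natCast ((2:ℝ) ^ (-(1 / (l : ℝ)))) l, ← Real.rpow_mul two_pos.le]
      have : -(1 / (l:ℝ)) * (l:ℕ) = -1 := by field_simp
      rw [this, Real.rpow_neg_one]
    rw [mul_pow, h3] at h2
    nlinarith
  set A : ℝ := (N:ℝ) * ψ' ^ l with hA_def
  have hA0 : 0 < A := by positivity
  have hψl0 : 0 < (N:ℝ) * ψ N ^ l := by positivity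
  have hinv1 : 1 / A < 1 := by rw [div_lt_one hA0]; exact key1
  have hinv2 : 1 / A < 2 / ((N:ℝ) * ψ N ^ l) := by
    rw [div_lt_div_iff₀ hA0 hψl0, hA_def]
    nlinarith
  set cc : ℝ := (1 / A + min 1 (2 / ((N:ℝ) * ψ N ^ l))) / 2 with hcc_def
  have hminA : 1 / A < min 1 (2 / ((N:ℝ) * ψ N ^ l)) := lt_min hinv1 hinv2
  have hcc0 : 0 < cc := by
    have : 0 < 1 / A := by positivity
    simp only [hcc_def]; linarith
  have hccA : 1 / A < cc := by simp only [hcc_def]; linarith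
  have hccmin : cc < min 1 (2 / ((N:ℝ) * ψ N ^ l)) := by simp only [hcc_def]; linarith
  have hcc1 : cc < 1 := hccmin.trans_le (min_le_left _ _)
  have hcc2 : cc < 2 / ((N:ℝ) * ψ N ^ l) := hccmin.trans_le (min_le_right _ _)
  -- apply the box lemma
  set cvec : Fin (l+1+1) → ℝ := Fin.cons 0 (Fin.cons y x) with hcvec
  set rvec : Fin (l+1+1) → ℝ := Fin.cons (N:ℝ) (Fin.cons cc (fun _ => ψ')) with hrvec
  have hrpos : ∀ j, 0 < rvec j := by
    intro j
    refine Fin.cases ?_ (fun k => ?_) j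
    · simpa [hrvec] using hN0
    · refine Fin.cases ?_ (fun i => ?_) k <;> simp [hrvec, hcc0, hψ'0]
  have hprod : ∏ j, (2 * rvec j) = 2 ^ (l+1+1) * ((N:ℝ) * (cc * ψ' ^ l)) := by
    rw [Finset.prod_mul_distrib, Finset.prod_const]
    simp only [hrvec, Fin.prod_cons, Finset.prod_const, Finset.card_univ, Fintype.card_fin]
  have hvol : (2:ℝ) ^ (l+1+1) < ∏ j, (2 * rvec j) := by
    rw [hprod]
    have h1 : 1 < (N:ℝ) * (cc * ψ' ^ l) := by
      have : 1 / A < cc := hccA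
      rw [div_lt_iff₀ hA0] at this
      calc (1:ℝ) < cc * A := this
        _ = (N:ℝ) * (cc * ψ' ^ l) := by rw [hA_def]; ring
    calc (2:ℝ) ^ (l+1+1) = 2 ^ (l+1+1) * 1 := by ring
      _ < 2 ^ (l+1+1) * ((N:ℝ) * (cc * ψ' ^ l)) := by
          exact mul_lt_mul_of_pos_left h1 (by positivity)
  obtain ⟨m, hmnz, hmb⟩ := box_lattice_point (l+1) cvec rvec (by simp [hcvec]) hrpos hvol
  have h0 : |(m 0 : ℝ)| ≤ (N:ℝ) := by
    have := hmb 0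
    simpa [hcvec, hrvec] using this
  have h1 : |(m ((0:Fin (l+1)).succ) : ℝ) - y * (m 0 : ℝ)| ≤ cc := by
    have := hmb ((0:Fin (l+1)).succ)
    simpa [hcvec, hrvec, Fin.cons_succ] using this
  have hxi : ∀ i : Fin l, |(m (i.succ.succ) : ℝ) - x i * (m 0 : ℝ)| ≤ ψ' := by
    intro i
    have := hmb (i.succ.succ)
    simpa [hcvec, hrvec, Fin.cons_succ] using this
  -- m 0 ≠ 0
  have hm00 : m 0 ≠ 0 := by
    intro hz
    apply hmnz
    have hz' : (m 0 : ℝ) = 0 := by exact_mod_cast hz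
    have hm1 : m ((0:Fin (l+1)).succ) = 0 := by
      rw [hz', mul_zero, sub_zero] at h1
      have : |(m ((0:Fin (l+1)).succ) : ℝ)| < 1 := lt_of_le_of_lt h1 hcc1
      rw [← Int.cast_abs] at this
      have h2 : |m ((0:Fin (l+1)).succ)| < 1 := by exact_mod_cast this
      rw [abs_lt] at h2
      omega
    have hmi : ∀ i : Fin l, m (i.succ.succ) = 0 := by
      intro i
      have h := hxi i
      rw [hz', mul_zero, sub_zero] at h
      have : |(m (i.succ.succ) : ℝ)| < 1 := lt_of_le_of_lt h hψ'1
      rw [← Int.cast_abs] at this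
      have h2 : |m (i.succ.succ)| < 1 := by exact_mod_cast this
      rw [abs_lt] at h2
      omega
    intro j
    refine Fin.cases hz (fun k => ?_) j
    refine Fin.cases hm1 (fun i => hmi i) k
  -- set up q, sign
  set σ : ℤ := if 0 ≤ m 0 then 1 else -1 with hσ_def
  set q : ℕ := (m 0).natAbs with hq_def
  have hq_eq : ((q:ℤ)) = σ * m 0 := by
    by_cases h : 0 ≤ m 0
    · simp [hσ_def, h, hq_def, Int.natAbs_of_nonneg h]
    · simp only [hσ_def, if_neg h, hq_def]
      rw [Int.ofNat_natAbs_of_nonpos (le_of_not_ge h)]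
      ring
  have hσabs : |(σ:ℝ)| = 1 := by
    by_cases h : 0 ≤ m 0 <;> simp [hσ_def, h]
  have hq1 : 1 ≤ q := by
    rcases Nat.eq_zero_or_pos q with h | h
    · exact absurd (Int.natAbs_eq_zero.mp h) hm00
    · exact h
  have hqR : ((q:ℝ)) = (σ:ℝ) * (m 0 : ℝ) := by exact_mod_cast hq_eq
  have hqN : q ≤ N := by
    have : ((q:ℝ)) ≤ (N:ℝ) := by
      rw [hqR]
      calc (σ:ℝ) * (m 0:ℝ) ≤ |(σ:ℝ) * (m 0:ℝ)| := le_abs_self _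
        _ = |(m 0:ℝ)| := by rw [abs_mul, hσabs, one_mul]
        _ ≤ N := h0
    exact_mod_cast this
  have hqpos : (0:ℝ) < (q:ℝ) := by exact_mod_cast hq1
  set p' : ℤ := σ * m ((0:Fin (l+1)).succ) with hp'_def
  set a : Fin l → ℤ := fun i => σ * m (i.succ.succ) with ha_def
  have hqy : |(q:ℝ) * y - (p':ℝ)| ≤ cc := by
    have : (q:ℝ) * y - (p':ℝ) = -((σ:ℝ) * ((m ((0:Fin (l+1)).succ):ℝ) - y * (m 0:ℝ))) := by
      rw [hqR, hp'_def]; push_cast; ring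
    rw [this, abs_neg, abs_mul, hσabs, one_mul]
    exact h1
  have hqa : ∀ i, |(q:ℝ) * x i - ((a i):ℝ)| ≤ ψ' := by
    intro i
    have : (q:ℝ) * x i - ((a i):ℝ)
        = -((σ:ℝ) * ((m (i.succ.succ):ℝ) - x i * (m 0:ℝ))) := by
      rw [hqR, ha_def]; push_cast; ring
    rw [this, abs_neg, abs_mul, hσabs, one_mul]
    exact hxi i
  refine ⟨q, hq1, hqN, ?_, ?_⟩
  · -- distInt bound
    have hle : distInt (fun i => (q:ℝ) * x i) ≤ ‖(fun i => (q:ℝ) * x i) - fun i => ((a i : ℝ))‖ := by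
      apply ciInf_le
      exact ⟨0, by rintro _ ⟨pp, rfl⟩; exact norm_nonneg _⟩
    refine lt_of_le_of_lt (hle.trans ?_) hψ'ψ
    rw [pi_norm_le_iff_of_nonneg hψ'0.le]
    intro i
    simpa [Real.norm_eq_abs] using hqa i
  · -- the rational approximation
    set P : ℤ := max 0 (min p' (q:ℤ)) with hP_def
    have hP0 : 0 ≤ P := le_max_left _ _
    have hPq : P ≤ (q:ℤ) := max_le (by exact_mod_cast Nat.zero_le q) (min_le_right _ _)
    refine ⟨P.toNat, ?_, ?_⟩
    · have : (P.toNat : ℤ) ≤ (q:ℤ) := by rwa [Int.toNat_of_nonneg hP0]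
      exact_mod_cast this
    · have hPR : ((P.toNat : ℕ) : ℝ) = (P : ℝ) := by
        rw [← Int.cast_natCast, Int.toNat_of_nonneg hP0]
      have hclamp : |(q:ℝ) * y - (P:ℝ)| ≤ |(q:ℝ) * y - (p':ℝ)| := by
        have hqy0 : 0 ≤ (q:ℝ) * y := by positivity
        have hqyq : (q:ℝ) * y ≤ (q:ℝ) := by nlinarith
        rcases le_or_gt p' 0 with h | h
        · have hPz : P = 0 := max_eq_left (le_trans (min_le_left _ _) h)
          have hp'0 : (p':ℝ) ≤ 0 := by exact_mod_cast h
          rw [hPz]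
          rw [Int.cast_zero, sub_zero, abs_of_nonneg hqy0]
          calc (q:ℝ) * y ≤ (q:ℝ) * y - (p':ℝ) := by linarith
            _ ≤ |(q:ℝ) * y - (p':ℝ)| := le_abs_self _
        · rcases le_or_gt p' (q:ℤ) with h2 | h2
          · have hPz : P = p' := by
              rw [hP_def, min_eq_left h2, max_eq_right h.le]
            rw [hPz]
          · have hPz : P = (q:ℤ) := by
              rw [hP_def, min_eq_right h2.le, max_eq_right (by exact_mod_cast Nat.zero_le q)]
            have hp'q : (q:ℝ) < (p':ℝ) := by exact_mod_cast h2
            rw [hPz, Int.cast_natCast, abs_of_nonpos (by linarith)]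
            calc -((q:ℝ) * y - (q:ℝ)) = (q:ℝ) - (q:ℝ) * y := by ring
              _ ≤ (p':ℝ) - (q:ℝ) * y := by linarith
              _ = -((q:ℝ) * y - (p':ℝ)) := by ring
              _ ≤ |(q:ℝ) * y - (p':ℝ)| := neg_le_abs _
      have hyP : |y - ((P.toNat : ℕ) : ℝ) / (q:ℝ)| ≤ cc / (q:ℝ) := by
        rw [hPR]
        have heq : y - (P:ℝ) / (q:ℝ) = ((q:ℝ) * y - (P:ℝ)) / (q:ℝ) := by
          field_simp
        rw [heq, abs_div, abs_of_pos hqpos]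
        gcongr
        exact hclamp.trans hqy
      refine lt_of_le_of_lt hyP ?_
      calc cc / (q:ℝ) < (2 / ((N:ℝ) * ψ N ^ l)) / (q:ℝ) := by gcongr
        _ = 2 / ((q:ℝ) * N * ψ N ^ l) := by rw [div_div]; ring
end
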